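/- The volume of the oblique cylinder, i.e., the convex hull of the disks {(x,y,0) : x²+y² ≤ 1} and {(x,y,b) : x²+(y-a)² ≤ 1} with a ≥ 0 and b > 0, equals πb. -/

import Mathlib

open MeasureTheory Real

theorem oblique_cylinder_volume (a b : ℝ) (ha : 0 ≤ a) (hb : 0 < b) :
    volume (convexHull ℝ
      ({p : ℝ × ℝ × ℝ | p.1 ^ 2 + p.2.1 ^ 2 ≤ 1 ∧ p.2.2 = 0} ∪
       {p : ℝ × ℝ × ℝ | p.1 ^ 2 + (p.2.1 - a) ^ 2 ≤ 1 ∧ p.2.2 = b})) =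
    ENNReal.ofReal (π * b) := by
  have hb0 : b ≠ 0 := ne_of_gt hb
  set c : ℝ := a / b with hc
  set S : Set (ℝ × ℝ × ℝ) :=
    {p : ℝ × ℝ × ℝ | p.1 ^ 2 + (p.2.1 - c * p.2.2) ^ 2 ≤ 1 ∧ p.2.2 ∈ Set.Icc 0 b} with hS
  -- step 1 : hull = S
  have hSconv : Convex ℝ S := by
    rintro ⟨x₁, y₁, z₁⟩ ⟨h₁, hz₁⟩ ⟨x₂, y₂, z₂⟩ ⟨h₂, hz₂⟩ lam mu hlam hmu hsum
    simp only [Set.mem_setOf_eq] at h₁ h₂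
    constructor
    · simp only [Prod.smul_mk, Prod.mk_add_mk, smul_eq_mul, Set.mem_setOf_eq]
      have hmu' : mu = 1 - lam := by linarith
      subst hmu'
      nlinarith [mul_nonneg (mul_nonneg hlam hmu) (sq_nonneg (x₁ - x₂)),
        mul_nonneg (mul_nonneg hlam hmu) (sq_nonneg ((y₁ - c * z₁) - (y₂ - c * z₂))),
        mul_nonneg hlam (sub_nonneg.2 h₁), mul_nonneg hmu (sub_nonneg.2 h₂)]
    · exact (convex_Icc 0 b) hz₁ hz₂ hlam hmu hsum
  have hhull : convexHull ℝ
      ({p : ℝ × ℝ × ℝ | p.1 ^ 2 + p.2.1 ^ 2 ≤ 1 ∧ p.2.2 = 0} ∪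
       {p : ℝ × ℝ × ℝ | p.1 ^ 2 + (p.2.1 - a) ^ 2 ≤ 1 ∧ p.2.2 = b}) = S := by
    apply le_antisymm
    · apply convexHull_min _ hSconv
      rintro ⟨x, y, z⟩ (⟨hxy, hz⟩ | ⟨hxy, hz⟩) <;> simp only [Set.mem_setOf_eq] at hxy hz ⊢
      · refine ⟨?_, by rw [hz]; simp [le_of_lt hb]⟩
        show x ^ 2 + (y - c * z) ^ 2 ≤ 1
        rw [hz]; simpa using hxy
      · have hcb : c * b = a := div_mul_cancel₀ a hb0
        refine ⟨?_, by rw [hz]; simp [le_of_lt hb]⟩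
        show x ^ 2 + (y - c * z) ^ 2 ≤ 1
        rw [hz, hcb]; simpa using hxy
    · rintro ⟨x, y, z⟩ ⟨hxy, hz0, hzb⟩
      set t : ℝ := z / b with ht
      have ht0 : 0 ≤ t := div_nonneg hz0 (le_of_lt hb)
      have ht1 : t ≤ 1 := (div_le_one hb).2 hzb
      have hta : t * a = c * z := by rw [hc, ht]; ring
      have hq0 : ((x, y - t * a, (0:ℝ)) : ℝ × ℝ × ℝ) ∈
          ({p : ℝ × ℝ × ℝ | p.1 ^ 2 + p.2.1 ^ 2 ≤ 1 ∧ p.2.2 = 0} ∪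
           {p : ℝ × ℝ × ℝ | p.1 ^ 2 + (p.2.1 - a) ^ 2 ≤ 1 ∧ p.2.2 = b}) := by
        left; exact ⟨by rw [hta]; simpa using hxy, rfl⟩
      have hq1 : ((x, y - t * a + a, b) : ℝ × ℝ × ℝ) ∈
          ({p : ℝ × ℝ × ℝ | p.1 ^ 2 + p.2.1 ^ 2 ≤ 1 ∧ p.2.2 = 0} ∪
           {p : ℝ × ℝ × ℝ | p.1 ^ 2 + (p.2.1 - a) ^ 2 ≤ 1 ∧ p.2.2 = b}) := by
        right
        refine ⟨?_, rfl⟩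
        show x ^ 2 + (y - t * a + a - a) ^ 2 ≤ 1
        have heq : y - t * a + a - a = y - c * z := by rw [← hta]; ring
        rw [heq]; simpa using hxy
      have hcomb : ((x, y, z) : ℝ × ℝ × ℝ) =
          (1 - t) • ((x, y - t * a, (0:ℝ)) : ℝ × ℝ × ℝ) + t • ((x, y - t * a + a, b) : ℝ × ℝ × ℝ) := by
        have htb : t * b = z := div_mul_cancel₀ z hb0
        simp only [Prod.smul_mk, Prod.mk_add_mk, smul_eq_mul, Prod.mk.injEq]
        refine ⟨by ring, by ring, by rw [mul_zero, zero_add, htb]⟩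
      rw [hcomb]
      exact (convex_convexHull ℝ _) (subset_convexHull ℝ _ hq0) (subset_convexHull ℝ _ hq1)
        (by linarith) ht0 (by ring)
  rw [hhull]
  -- step 2 : volume of S
  -- the straight cylinder
  set C : Set (ℝ × ℝ × ℝ) :=
    {p : ℝ × ℝ × ℝ | p.1 ^ 2 + p.2.1 ^ 2 ≤ 1 ∧ p.2.2 ∈ Set.Icc 0 b} with hCdef
  have hCmeas : MeasurableSet C := by
    apply MeasurableSet.inter
    · exact measurableSet_le ((measurable_fst.pow_const 2).add
        ((measurable_fst.comp measurable_snd).pow_const 2)) measurable_const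
    · exact (measurable_snd.comp measurable_snd) measurableSet_Icc
  -- the shear is measure preserving
  have hskew : MeasurePreserving (fun p : ℝ × ℝ => (p.1, p.2 - c * p.1))
      (volume.prod volume) (volume.prod volume) := by
    refine (MeasurePreserving.id volume).skew_product (g := fun z y => y - c * z)
      (measurable_snd.sub (measurable_const.mul measurable_fst)) ?_
    exact Filter.Eventually.of_forall fun z => (measurePreserving_sub_right volume (c * z)).map_eq
  have hshear2 : MeasurePreserving (fun q : ℝ × ℝ => (q.1 - c * q.2, q.2))
      (volume.prod volume) (volume.prod volume) :=
    Measure.measurePreserving_swap.comp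
      (hskew.comp Measure.measurePreserving_swap)
  have hF : MeasurePreserving (fun p : ℝ × ℝ × ℝ => (p.1, p.2.1 - c * p.2.2, p.2.2))
      volume volume :=
    (MeasurePreserving.id volume).prod hshear2
  have hpre : (fun p : ℝ × ℝ × ℝ => (p.1, p.2.1 - c * p.2.2, p.2.2)) ⁻¹' C = S := rfl
  have h1 : volume S = volume C := by
    rw [← hpre]
    exact hF.measure_preimage hCmeas.nullMeasurableSet
  -- volume of the straight cylinder via prodAssoc
  set D : Set (ℝ × ℝ) := {q : ℝ × ℝ | q.1 ^ 2 + q.2 ^ 2 ≤ 1} with hDdef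
  have hDmeas : MeasurableSet D :=
    measurableSet_le ((measurable_fst.pow_const 2).add (measurable_snd.pow_const 2))
      measurable_const
  have hpa := measurePreserving_prodAssoc (volume : Measure ℝ) (volume : Measure ℝ)
    (volume : Measure ℝ)
  have hpreC : (MeasurableEquiv.prodAssoc : (ℝ × ℝ) × ℝ ≃ᵐ ℝ × ℝ × ℝ) ⁻¹' C
      = D ×ˢ Set.Icc 0 b := rfl
  have h2 : volume C = ((volume : Measure (ℝ × ℝ)).prod volume) (D ×ˢ Set.Icc 0 b) := by
    rw [← hpreC]
    exact (hpa.measure_preimage hCmeas.nullMeasurableSet).symm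
  -- disk area
  have hDvol : (volume : Measure (ℝ × ℝ)) D = ENNReal.ofReal π := by
    have hpreD : (Complex.measurableEquivRealProd : ℂ ≃ᵐ ℝ × ℝ) ⁻¹' D
        = Metric.closedBall (0 : ℂ) 1 := by
      ext z
      simp only [Set.mem_preimage, Metric.mem_closedBall, Complex.dist_eq, sub_zero,
        Complex.measurableEquivRealProd_apply, hDdef, Set.mem_setOf_eq]
      constructor
      · intro h
        have h2 : ‖z‖ ^ 2 = z.re ^ 2 + z.im ^ 2 := by
          rw [Complex.sq_norm, Complex.normSq_apply]; ring
        nlinarith [norm_nonneg z]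
      · intro h
        have h2 : ‖z‖ ^ 2 = z.re ^ 2 + z.im ^ 2 := by
          rw [Complex.sq_norm, Complex.normSq_apply]; ring
        nlinarith [norm_nonneg z]
    have := Complex.volume_preserving_equiv_real_prod.measure_preimage
      hDmeas.nullMeasurableSet
    rw [hpreD] at this
    rw [← this, Complex.volume_closedBall]
    simp [ENNReal.ofReal_one]
    rw [← NNReal.coe_real_pi, ENNReal.ofReal_coe_nnreal]
  rw [h1, h2, Measure.prod_prod, hDvol, Real.volume_Icc, sub_zero,
    ← ENNReal.ofReal_mul Real.pi_pos.le]
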